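/- For all integers n ≥ 0 and j ≥ 0, d_{4j+3}(4n + 2) ≡ 0 (mod 2). -/

import Mathlib

open PowerSeries Finset

namespace Stmt4Aux


abbrev R2 := ZMod 2

/-- coefficient-wise equality up to degree `n` -/
def CEq (n : ℕ) (S T : PowerSeries R2) : Prop := ∀ i ≤ n, coeff (R := R2) i S = coeff (R := R2) i T

lemma CEq.mul {n : ℕ} {S S' T T' : PowerSeries R2} (h : CEq n S S') (h' : CEq n T T') :
    CEq n (S * T) (S' * T') := by
  intro i hi
  rw [coeff_mul, coeff_mul]
  refine Finset.sum_congr rfl fun p hp => ?_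
  rw [Finset.HasAntidiagonal.mem_antidiagonal] at hp
  rw [h p.1 (by omega), h' p.2 (by omega)]

lemma xpow_dvd_one_sub_pow (m e : ℕ) :
    (X ^ m : PowerSeries R2) ∣ 1 - (1 - X ^ m) ^ e := by
  induction e with
  | zero => simp
  | succ e ih =>
    have : (1 : PowerSeries R2) - (1 - X ^ m) ^ (e + 1)
        = (1 - (1 - X ^ m) ^ e) + (1 - X ^ m) ^ e * (X ^ m) := by ring
    rw [this]
    exact dvd_add ih (Dvd.intro_left _ rfl)

lemma CEq_one_sub_pow {n m : ℕ} (hm : n < m) (e : ℕ) :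
    CEq n ((1 - X ^ m) ^ e) 1 := by
  obtain ⟨u, hu⟩ := xpow_dvd_one_sub_pow m e
  intro i hi
  have h1 : ((1 - X ^ m) ^ e : PowerSeries R2) = 1 - X ^ m * u := by
    rw [← hu]; ring
  rw [h1, map_sub]
  have : coeff (R := R2) i (X ^ m * u) = 0 := by
    rw [coeff_X_pow_mul']
    simp [Nat.not_le.mpr (lt_of_le_of_lt hi hm)]
  rw [this, sub_zero]

lemma CEq_prod_one {n : ℕ} {s : Finset ℕ} {f : ℕ → PowerSeries R2}
    (h : ∀ x ∈ s, CEq n (f x) 1) : CEq n (∏ x ∈ s, f x) 1 := by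
  classical
  induction s using Finset.induction_on with
  | empty => intro i hi; simp
  | insert a s hx ih =>
    rw [Finset.prod_insert hx]
    have h1 := h a (Finset.mem_insert_self a s)
    have h2 := ih fun x hxm => h x (Finset.mem_insert_of_mem hxm)
    intro i hi
    have := (CEq.mul h1 h2) i hi
    simpa using this

lemma two_eq_zero : (2 : PowerSeries R2) = 0 := by
  have h : (2 : PowerSeries R2) = 1 + 1 := by norm_num
  rw [h]
  ext i
  rw [map_add]
  simp [coeff_one]
  split <;> decide

lemma sq_one_sub (m : ℕ) : ((1 : PowerSeries R2) - X ^ m) ^ 2 = 1 - X ^ (2 * m) := by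
  have h2 := two_eq_zero
  rw [two_mul, pow_add]
  linear_combination (X ^ m * X ^ m - X ^ m : PowerSeries R2) * h2

lemma pow4_one_sub (m : ℕ) : ((1 : PowerSeries R2) - X ^ m) ^ 4 = 1 - X ^ (4 * m) := by
  have : ((1 : PowerSeries R2) - X ^ m) ^ 4 = (((1 : PowerSeries R2) - X ^ m) ^ 2) ^ 2 := by ring
  rw [this, sq_one_sub, sq_one_sub]
  ring_nf

def Supp4 (S : PowerSeries R2) : Prop := ∀ i : ℕ, ¬ (4 ∣ i) → coeff (R := R2) i S = 0

lemma Supp4.mul {S T : PowerSeries R2} (hS : Supp4 S) (hT : Supp4 T) : Supp4 (S * T) := by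
  intro i hi
  rw [coeff_mul]
  refine Finset.sum_eq_zero fun p hp => ?_
  rw [Finset.HasAntidiagonal.mem_antidiagonal] at hp
  by_cases h1 : 4 ∣ p.1
  · have h2 : ¬ 4 ∣ p.2 := by omega
    rw [hT p.2 h2, mul_zero]
  · rw [hS p.1 h1, zero_mul]

lemma Supp4.one : Supp4 1 := by
  intro i hi
  have : i ≠ 0 := by omega
  simp [coeff_one, this]

lemma Supp4.pow {S : PowerSeries R2} (hS : Supp4 S) (e : ℕ) : Supp4 (S ^ e) := by
  induction e with
  | zero => simpa using Supp4.one
  | succ e ih => rw [pow_succ]; exact ih.mul hS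

lemma Supp4.one_sub_X_pow (m : ℕ) : Supp4 (1 - X ^ (4 * m) : PowerSeries R2) := by
  intro i hi
  rw [map_sub]
  have h0 : i ≠ 0 := by omega
  have h1 : i ≠ 4 * m := by omega
  rw [coeff_one, coeff_X_pow]
  simp [h0, h1]

lemma Supp4.prod {s : Finset ℕ} {f : ℕ → PowerSeries R2}
    (h : ∀ x ∈ s, Supp4 (f x)) : Supp4 (∏ x ∈ s, f x) := by
  classical
  induction s using Finset.induction_on with
  | empty => simpa using Supp4.one
  | insert a s hx ih =>
    rw [Finset.prod_insert hx]
    exact (h a (Finset.mem_insert_self a s)).mul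
      (ih fun x hxm => h x (Finset.mem_insert_of_mem hxm))

end Stmt4Aux



/-- `ElongatedDiamondGF d` says that for every `k ≥ 1`, the sequence `d k` satisfies the
formal power series identity `∑_{n≥0} d_k(n) q^n = ∏_{m≥1} (1 − q^{2m})^k / ∏_{m≥1} (1 − q^m)^{3k+1}`
in `ℤ[[q]]`, i.e. `(∑_{n≥0} d_k(n) q^n) · ∏_{m≥1} (1 − q^m)^{3k+1} = ∏_{m≥1} (1 − q^{2m})^k`.
Since the factors with `m > n` do not affect the coefficient of `q^n`, this infinite-product
identity is encoded coefficient-wise via the truncated (finite) products over `1 ≤ m ≤ n`.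
Combinatorially, `d k n` counts the partitions obtained by adding the links of the
`k`-elongated plane partition diamonds of length `n`. -/
def ElongatedDiamondGF (d : ℕ → ℕ → ℤ) : Prop :=
  ∀ k : ℕ, 1 ≤ k → ∀ n : ℕ,
    (PowerSeries.coeff (R := ℤ) n)
        ((PowerSeries.mk fun i => d k i) *
          ∏ m ∈ Finset.Icc 1 n, (1 - PowerSeries.X ^ m) ^ (3 * k + 1)) =
      (PowerSeries.coeff (R := ℤ) n) (∏ m ∈ Finset.Icc 1 n, (1 - PowerSeries.X ^ (2 * m)) ^ k)

open Stmt4Aux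

theorem stmt_4 (d : ℕ → ℕ → ℤ) (hd : ElongatedDiamondGF d) :
    ∀ n j : ℕ, (2 : ℤ) ∣ d (4 * j + 3) (4 * n + 2) := by
  intro n j
  set k : ℕ := 4 * j + 3 with hk
  set φ : ℤ →+* R2 := Int.castRingHom R2 with hφ
  set F : PowerSeries R2 := PowerSeries.map φ (PowerSeries.mk fun i => d k i) with hF
  suffices h : ∀ m : ℕ, coeff (R := R2) (4 * m + 2) F = 0 by
    have hn := h n
    have hcoeff : coeff (R := R2) (4 * n + 2) F = ((d k (4 * n + 2) : ℤ) : R2) := by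
      rw [hF, PowerSeries.coeff_map, coeff_mk]; rfl
    rw [hcoeff] at hn
    exact_mod_cast (ZMod.intCast_zmod_eq_zero_iff_dvd _ 2).mp hn
  -- mapped generating-function identity, with (1 - X^(2x))^k rewritten as (1 - X^x)^(2k)
  have hmap : ∀ i : ℕ,
      coeff (R := R2) i (F * ∏ x ∈ Icc 1 i, (1 - X ^ x) ^ (3 * k + 1)) =
      coeff (R := R2) i (∏ x ∈ Icc 1 i, (1 - X ^ x) ^ (2 * k)) := by
    intro i
    have h0 := congrArg φ (hd k (by omega) i)
    rw [← PowerSeries.coeff_map, ← PowerSeries.coeff_map] at h0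
    have hB : (∏ x ∈ Icc 1 i, ((1 : PowerSeries R2) - X ^ (2 * x)) ^ k) =
        ∏ x ∈ Icc 1 i, (1 - X ^ x) ^ (2 * k) := by
      refine Finset.prod_congr rfl fun x _ => ?_
      rw [← sq_one_sub, ← pow_mul]
    rw [← hB]
    simpa [hF, map_mul, map_prod, map_pow, map_sub, map_one, PowerSeries.map_X] using h0
  intro m
  induction m using Nat.strong_induction_on with
  | _ m IH =>
  set N : ℕ := 4 * m + 2 with hN
  -- truncation stability of the products
  have hsplit : ∀ (e i : ℕ), i ≤ N →
      CEq i (∏ x ∈ Icc 1 N, (1 - X ^ x) ^ e) (∏ x ∈ Icc 1 i, (1 - X ^ x) ^ e) := by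
    intro e i hi
    have hs : (∏ x ∈ Icc 1 N, ((1 : PowerSeries R2) - X ^ x) ^ e)
        = (∏ x ∈ Icc 1 i, (1 - X ^ x) ^ e) * ∏ x ∈ Ioc i N, (1 - X ^ x) ^ e := by
      rw [show Finset.Icc 1 N = Finset.Ioc 0 N from Finset.Icc_add_one_left_eq_Ioc 0 N,
          show Finset.Icc 1 i = Finset.Ioc 0 i from Finset.Icc_add_one_left_eq_Ioc 0 i]
      exact (Finset.prod_Ioc_consecutive _ (Nat.zero_le i) hi).symm
    rw [hs]
    have htail : CEq i (∏ x ∈ Ioc i N, ((1 : PowerSeries R2) - X ^ x) ^ e) 1 :=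
      CEq_prod_one fun x hx => CEq_one_sub_pow (Finset.mem_Ioc.mp hx).1 e
    intro a ha
    have hrfl : CEq i (∏ x ∈ Icc 1 i, ((1 : PowerSeries R2) - X ^ x) ^ e)
        (∏ x ∈ Icc 1 i, (1 - X ^ x) ^ e) := fun b _ => rfl
    have := (CEq.mul hrfl htail) a ha
    simpa using this
  -- the identity at level N for all i ≤ N
  have hN' : ∀ i ≤ N,
      coeff (R := R2) i (F * ∏ x ∈ Icc 1 N, (1 - X ^ x) ^ (3 * k + 1)) =
      coeff (R := R2) i (∏ x ∈ Icc 1 N, (1 - X ^ x) ^ (2 * k)) := by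
    intro i hi
    have hFrfl : CEq i F F := fun b _ => rfl
    calc coeff (R := R2) i (F * ∏ x ∈ Icc 1 N, (1 - X ^ x) ^ (3 * k + 1))
        = coeff (R := R2) i (F * ∏ x ∈ Icc 1 i, (1 - X ^ x) ^ (3 * k + 1)) :=
          (CEq.mul hFrfl (hsplit (3 * k + 1) i hi)) i le_rfl
      _ = coeff (R := R2) i (∏ x ∈ Icc 1 i, (1 - X ^ x) ^ (2 * k)) := hmap i
      _ = coeff (R := R2) i (∏ x ∈ Icc 1 N, (1 - X ^ x) ^ (2 * k)) := ((hsplit (2 * k) i hi) i le_rfl).symm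
  set Q : PowerSeries R2 := ∏ x ∈ Icc 1 N, (1 - X ^ x) ^ (2 * k) with hQ
  set P : PowerSeries R2 := ∏ x ∈ Icc 1 N, (1 - X ^ x) ^ (k + 1) with hP
  have hA : (∏ x ∈ Icc 1 N, ((1 : PowerSeries R2) - X ^ x) ^ (3 * k + 1)) = Q * P := by
    rw [hQ, hP, ← Finset.prod_mul_distrib]
    refine Finset.prod_congr rfl fun x _ => ?_
    rw [← pow_add]
    congr 1
    omega
  -- P is supported on multiples of 4
  have hPeq : P = ∏ x ∈ Icc 1 N, ((1 : PowerSeries R2) - X ^ (4 * x)) ^ (j + 1) := by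
    rw [hP]
    refine Finset.prod_congr rfl fun x _ => ?_
    rw [← pow4_one_sub, ← pow_mul]
    congr 1
  have hP4 : Supp4 P := by
    rw [hPeq]
    exact Supp4.prod fun x _ => (Supp4.one_sub_X_pow x).pow (j + 1)
  -- constant coefficients
  have hconst : ∀ (e : ℕ),
      constantCoeff (R := R2) (∏ x ∈ Icc 1 N, ((1 : PowerSeries R2) - X ^ x) ^ e) = 1 := by
    intro e
    rw [map_prod]
    refine Finset.prod_eq_one fun x hx => ?_
    have hx1 : x ≠ 0 := by have := (Finset.mem_Icc.mp hx).1; omega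
    simp [map_pow, map_sub, zero_pow hx1]
  have hQc : constantCoeff (R := R2) Q = 1 := hconst (2 * k)
  have hPc : constantCoeff (R := R2) P = 1 := hconst (k + 1)
  -- Q is invertible
  set Qi : PowerSeries R2 := PowerSeries.invOfUnit Q 1 with hQidef
  have hQi : Q * Qi = 1 := PowerSeries.mul_invOfUnit Q 1 (by rw [hQc]; rfl)
  -- F * P agrees with 1 up to degree N
  have step : ∀ i ≤ N, coeff (R := R2) i ((F * P) * Q) = coeff (R := R2) i Q := by
    intro i hi
    have e1 : (F * P) * Q = F * ∏ x ∈ Icc 1 N, (1 - X ^ x) ^ (3 * k + 1) := by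
      rw [hA]; ring
    rw [e1]
    exact hN' i hi
  have hFP1 : CEq N (F * P) 1 := by
    intro i hi
    have e2 : F * P = ((F * P) * Q) * Qi := by rw [mul_assoc, hQi, mul_one]
    rw [e2]
    have hQirfl : CEq i Qi Qi := fun b _ => rfl
    calc coeff (R := R2) i ((F * P) * Q * Qi) = coeff (R := R2) i (Q * Qi) :=
          (CEq.mul (fun a ha => step a (le_trans ha hi)) hQirfl) i le_rfl
      _ = coeff (R := R2) i 1 := by rw [hQi]
  -- extract the coefficient at N
  have h0 : coeff (R := R2) N (F * P) = 0 := by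
    rw [hFP1 N le_rfl, coeff_one]
    simp [hN]
  rw [coeff_mul] at h0
  have hsum : ∑ p ∈ antidiagonal N, coeff (R := R2) p.1 F * coeff (R := R2) p.2 P = coeff (R := R2) N F := by
    rw [Finset.sum_eq_single (N, 0)]
    · rw [coeff_zero_eq_constantCoeff, hPc, mul_one]
    · intro p hp hne
      rw [Finset.HasAntidiagonal.mem_antidiagonal] at hp
      by_cases h4 : 4 ∣ p.2
      · obtain ⟨t, ht⟩ := h4
        by_cases hz : p.2 = 0
        · exact absurd (Prod.ext (by omega) hz) hne
        · have ht1 : 1 ≤ t := by omega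
          have htm : t ≤ m := by omega
          have hp1 : p.1 = 4 * (m - t) + 2 := by omega
          rw [hp1, IH (m - t) (by omega), zero_mul]
      · rw [hP4 p.2 h4, mul_zero]
    · intro hnot
      exact absurd (Finset.HasAntidiagonal.mem_antidiagonal.mpr (by simp)) hnot
  rw [hsum] at h0
  exact h0
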